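/- arXiv:1305.3204 — 6 statements merged into one kernel-verified Lean document; each statement's English description precedes it below -/
import Mathlib

section
/- For a finite strictly monotonic timed word ρ, a position i, and a nonnegative integer l: ρ,i ⊨ F_{[l,∞)}φ if and only if τ_i ≤ L^φ(ρ) − l and τ_i < L^φ(ρ), where L^φ(ρ) is the timestamp of the last position of ρ satisfying φ (with convention L^φ(ρ)=τ_1=0 if no position satisfies φ). -/
/-- For a finite strictly monotonic timed word ρ (timestamps `τ`, first
timestamp 0), a position `i`, and a nonnegative integer `l`:
ρ,i ⊨ F_{[l,∞)}φ iff τ i ≤ L^φ(ρ) − l and τ i < L^φ(ρ), where `L` is the timestamp of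
the last position satisfying φ (convention: `L = 0` when no position satisfies φ). -/
theorem mitl_lowerbound_future_closed {A : Type} {n : ℕ} (hn : 0 < n)
    (σ : Fin n → A) (τ : Fin n → ℝ) (hmono : StrictMono τ) (h0 : τ ⟨0, hn⟩ = 0)
    (φ : Fin n → Prop) (l : ℕ) (i : Fin n) (L : ℝ)
    (hL : (∃ j : Fin n, φ j ∧ τ j = L ∧ ∀ k : Fin n, φ k → k ≤ j) ∨
          ((∀ j : Fin n, ¬ φ j) ∧ L = 0)) :
    (∃ j : Fin n, i < j ∧ φ j ∧ (l : ℝ) ≤ τ j - τ i) ↔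
      (τ i ≤ L - (l : ℝ) ∧ τ i < L) := by
  rcases hL with ⟨j, hφj, hτj, hmax⟩ | ⟨hnone, hL0⟩
  · constructor
    · rintro ⟨j', hij', hφj', hl⟩
      have hle : τ j' ≤ τ j := hmono.monotone (hmax j' hφj')
      constructor
      · linarith
      · have : τ i < τ j' := hmono hij'
        linarith
    · rintro ⟨h1, h2⟩
      refine ⟨j, ?_, hφj, by linarith⟩
      have : τ i < τ j := by linarith
      exact hmono.lt_iff_lt.mp this
  · constructor
    · rintro ⟨j', _, hφj', _⟩
      exact absurd hφj' (hnone j')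
    · rintro ⟨_, h2⟩
      exfalso
      have : τ ⟨0, hn⟩ ≤ τ i := hmono.monotone (Fin.mk_le_mk.mpr (Nat.zero_le _) |>.trans_eq rfl)
      rw [h0] at this
      linarith [hL0 ▸ h2]
end

section
/- For a finite strictly monotonic timed word ρ, a position i, and a nonnegative integer l: ρ,i ⊨ F_{(l,∞)}φ if and only if τ_i < L^φ(ρ) − l, where L^φ(ρ) is the timestamp of the last position of ρ satisfying φ (with convention L^φ(ρ)=0 if no position satisfies φ). -/
/-- ρ,i ⊨ F_{(l,∞)}φ iff τ i < L^φ(ρ) − l, where `L` is the timestamp of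
the last position of the strictly monotonic timed word ρ satisfying φ
(convention: `L = 0` when no position satisfies φ). -/
theorem mitl_lowerbound_future_open {A : Type} {n : ℕ} (hn : 0 < n)
    (σ : Fin n → A) (τ : Fin n → ℝ) (hmono : StrictMono τ) (h0 : τ ⟨0, hn⟩ = 0)
    (φ : Fin n → Prop) (l : ℕ) (i : Fin n) (L : ℝ)
    (hL : (∃ j : Fin n, φ j ∧ τ j = L ∧ ∀ k : Fin n, φ k → k ≤ j) ∨
          ((∀ j : Fin n, ¬ φ j) ∧ L = 0)) :
    (∃ j : Fin n, i < j ∧ φ j ∧ (l : ℝ) < τ j - τ i) ↔ τ i < L - (l : ℝ) := by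
  have hτ0 : 0 ≤ τ i := by
    rw [← h0]; exact hmono.monotone (Fin.mk_le_of_le_val (Nat.zero_le _))
  rcases hL with ⟨j, hφj, hτj, hmax⟩ | ⟨hno, hL0⟩
  · constructor
    · rintro ⟨k, hik, hφk, hk⟩
      have : τ k ≤ L := hτj ▸ hmono.monotone (hmax k hφk)
      linarith
    · intro h
      refine ⟨j, ?_, hφj, by linarith [hτj]⟩
      have : τ i < τ j := by
        have : (0:ℝ) ≤ (l:ℝ) := Nat.cast_nonneg l
        linarith [hτj]
      exact hmono.lt_iff_lt.mp this
  · constructor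
    · rintro ⟨k, _, hφk, _⟩; exact absurd hφk (hno k)
    · intro h
      exfalso
      have : (0:ℝ) ≤ (l:ℝ) := Nat.cast_nonneg l
      rw [hL0] at h; linarith
end

section
/- For a finite strictly monotonic timed word ρ, a position i, and a nonnegative integer l: ρ,i ⊨ P_{[l,∞)}φ if and only if τ_i ≥ F^φ(ρ) + l and τ_i > F^φ(ρ), where F^φ(ρ) is the timestamp of the first position of ρ satisfying φ (with convention F^φ(ρ) = τ_{#ρ} if no position satisfies φ). -/
/-- ρ,i ⊨ P_{[l,∞)}φ iff τ i ≥ F^φ(ρ) + l and τ i > F^φ(ρ), where `F` is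
the timestamp of the first position of the strictly monotonic timed word ρ satisfying φ
(convention: `F = τ_{#ρ}`, the last timestamp, when no position satisfies φ). -/
theorem mitl_lowerbound_past_closed {A : Type} {n : ℕ} (hn : 0 < n)
    (σ : Fin n → A) (τ : Fin n → ℝ) (hmono : StrictMono τ) (h0 : τ ⟨0, hn⟩ = 0)
    (φ : Fin n → Prop) (l : ℕ) (i : Fin n) (F : ℝ)
    (hF : (∃ j : Fin n, φ j ∧ τ j = F ∧ ∀ k : Fin n, φ k → j ≤ k) ∨
          ((∀ j : Fin n, ¬ φ j) ∧ F = τ ⟨n - 1, Nat.sub_lt hn one_pos⟩)) :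
    (∃ j : Fin n, j < i ∧ φ j ∧ (l : ℝ) ≤ τ i - τ j) ↔
      (F + (l : ℝ) ≤ τ i ∧ F < τ i) := by
  rcases hF with ⟨j0, hφ0, hτ0, hmin⟩ | ⟨hno, hFlast⟩
  · constructor
    · rintro ⟨j, hji, hφj, hl⟩
      have hle : τ j0 ≤ τ j := hmono.le_iff_le.mpr (hmin j hφj)
      have hlt : τ j < τ i := hmono hji
      constructor
      · rw [← hτ0]; linarith
      · rw [← hτ0]; linarith
    · rintro ⟨h1, h2⟩
      refine ⟨j0, ?_, hφ0, by rw [hτ0]; linarith⟩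
      exact hmono.lt_iff_lt.mp (by rw [hτ0]; exact h2)
  · constructor
    · rintro ⟨j, _, hφj, _⟩; exact absurd hφj (hno j)
    · rintro ⟨_, h2⟩
      exfalso
      have : τ i ≤ F := by
        rw [hFlast]
        exact hmono.le_iff_le.mpr (Fin.mk_le_mk.mpr (Nat.le_sub_one_of_lt i.isLt) |>.trans_eq rfl)
      linarith
end

section
/- For a finite strictly monotonic timed word ρ, a position i, and a nonnegative integer l: ρ,i ⊨ P_{(l,∞)}φ if and only if τ_i > F^φ(ρ) + l, where F^φ(ρ) is the timestamp of the first position of ρ satisfying φ (with convention F^φ(ρ) = τ_{#ρ} if no position satisfies φ). -/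
/-- ρ,i ⊨ P_{(l,∞)}φ iff τ i > F^φ(ρ) + l, where `F` is the timestamp of
the first position of the strictly monotonic timed word ρ satisfying φ
(convention: `F = τ_{#ρ}` when no position satisfies φ). -/
theorem mitl_lowerbound_past_open {A : Type} {n : ℕ} (hn : 0 < n)
    (σ : Fin n → A) (τ : Fin n → ℝ) (hmono : StrictMono τ) (h0 : τ ⟨0, hn⟩ = 0)
    (φ : Fin n → Prop) (l : ℕ) (i : Fin n) (F : ℝ)
    (hF : (∃ j : Fin n, φ j ∧ τ j = F ∧ ∀ k : Fin n, φ k → j ≤ k) ∨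
          ((∀ j : Fin n, ¬ φ j) ∧ F = τ ⟨n - 1, Nat.sub_lt hn one_pos⟩)) :
    (∃ j : Fin n, j < i ∧ φ j ∧ (l : ℝ) < τ i - τ j) ↔ F + (l : ℝ) < τ i := by
  constructor
  · rintro ⟨j, hji, hφj, hl⟩
    rcases hF with ⟨j0, hφ0, hτ0, hmin⟩ | ⟨hno, _⟩
    · have h1 : F ≤ τ j := hτ0 ▸ hmono.monotone (hmin j hφj)
      linarith
    · exact absurd hφj (hno j)
  · intro h
    rcases hF with ⟨j0, hφ0, hτ0, hmin⟩ | ⟨hno, hFe⟩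
    · refine ⟨j0, ?_, hφ0, by rw [hτ0]; linarith⟩
      have hlt : τ j0 < τ i := by
        have : (0:ℝ) ≤ l := Nat.cast_nonneg l
        rw [hτ0]; linarith
      exact hmono.lt_iff_lt.mp hlt
    · exfalso
      have hle : i ≤ (⟨n - 1, Nat.sub_lt hn one_pos⟩ : Fin n) := by
        exact Fin.le_def.mpr (Nat.le_sub_one_of_lt i.isLt)
      have : τ i ≤ F := hFe ▸ hmono.monotone hle
      have : (0:ℝ) ≤ l := Nat.cast_nonneg l
      linarith
end

section
/- Over strictly monotonic timed words, if condition (1a) holds for position i with τ_i ∈ [r,r+1), namely τ_i < L^φ_{[r+l,r+l+1)}(ρ) and τ_i ∈ [r, L^φ_{[r+l,r+l+1)}(ρ) − l⟩_a, then ρ,i ⊨ F_{⟨_a l, l+1⟩_b} φ. (Here ⟨_a and ⟩_b record the openness/closeness of the endpoints of the interval ⟨l,l+1⟩.) -/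
/-- Membership in a lower bound `⟨l, _` of an interval: strict if the bracket is open. -/
def lbMem (o : Bool) (l t : ℝ) : Prop := if o then l < t else l ≤ t

/-- Membership in an upper bound `_, u⟩` of an interval: strict if the bracket is open. -/
def ubMem (o : Bool) (u t : ℝ) : Prop := if o then t < u else t ≤ u

/-- `L` is L^φ_I(ρ): the timestamp of the maximal position of ρ satisfying φ with
timestamp in `I` (convention: max(∅) = position 1, so `L = τ_1 = 0` if none). -/
def IsLastIn {n : ℕ} (τ : Fin n → ℝ) (φ : Fin n → Prop) (I : Set ℝ) (L : ℝ) : Prop :=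
  (∃ j, φ j ∧ τ j ∈ I ∧ τ j = L ∧ ∀ k, φ k → τ k ∈ I → k ≤ j) ∨
    ((∀ j, ¬ (φ j ∧ τ j ∈ I)) ∧ L = 0)

/-- `F` is F^φ_I(ρ): the timestamp of the minimal position of ρ satisfying φ with
timestamp in `I` (convention: min(∅) = #ρ, so `F = τ_{#ρ}` if none). -/
def IsFirstIn {n : ℕ} (hn : 0 < n) (τ : Fin n → ℝ) (φ : Fin n → Prop) (I : Set ℝ)
    (F : ℝ) : Prop :=
  (∃ j, φ j ∧ τ j ∈ I ∧ τ j = F ∧ ∀ k, φ k → τ k ∈ I → j ≤ k) ∨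
    ((∀ j, ¬ (φ j ∧ τ j ∈ I)) ∧ F = τ ⟨n - 1, Nat.sub_lt hn one_pos⟩)


/-- if condition (1a) holds for position i with τ_i ∈ [r,r+1), namely
τ_i < L^φ_{[r+l,r+l+1)}(ρ) and τ_i ∈ [r, L^φ_{[r+l,r+l+1)}(ρ) − l⟩_a, then
ρ,i ⊨ F_{⟨_a l, l+1⟩_b} φ. -/
theorem bounded_unit_future_of_1a {n : ℕ} (hn : 0 < n)
    (τ : Fin n → ℝ) (hmono : StrictMono τ) (h0 : τ ⟨0, hn⟩ = 0)
    (φ : Fin n → Prop) (r l : ℤ) (aO bO : Bool) (i : Fin n)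
    (hri : (r : ℝ) ≤ τ i ∧ τ i < (r : ℝ) + 1)
    (L1 : ℝ)
    (hL1 : IsLastIn τ φ (Set.Ico ((r : ℝ) + l) ((r : ℝ) + l + 1)) L1)
    (h1a : τ i < L1 ∧ (r : ℝ) ≤ τ i ∧ ubMem aO (L1 - (l : ℝ)) (τ i)) :
    ∃ j, i < j ∧ φ j ∧ lbMem aO (l : ℝ) (τ j - τ i) ∧
      ubMem bO ((l : ℝ) + 1) (τ j - τ i) := by
  obtain ⟨hlt, hr, hub⟩ := h1a
  rcases hL1 with ⟨j, hφ, ⟨hjl, hju⟩, hjL, _⟩ | ⟨_, hL0⟩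
  · refine ⟨j, ?_, hφ, ?_, ?_⟩
    · exact hmono.lt_iff_lt.mp (hjL ▸ hlt)
    · cases aO <;> simp only [lbMem, ubMem, Bool.false_eq_true, if_true, if_false] at hub ⊢ <;> rw [hjL] <;> linarith
    · have : τ j - τ i < (l : ℝ) + 1 := by linarith
      cases bO <;> simp only [ubMem, Bool.false_eq_true, if_true, if_false] <;> linarith
  · exfalso
    have : τ ⟨0, hn⟩ ≤ τ i := hmono.monotone (Fin.mk_le_mk.mpr (Nat.zero_le _)) 
    linarith [h0 ▸ this]
end

section
/- If ρ,i ⊨ F_{⟨_a l,l+1⟩_b} φ with τ_i ∈ [r,r+1) for integers r,l ≥ 0, and Idx^φ_{[r+l+1,r+l+2)}(ρ) = ∅, then condition (1a) holds: τ_i < L^φ_{[r+l,r+l+1)}(ρ) and τ_i ∈ [r, L^φ_{[r+l,r+l+1)}(ρ) − l⟩_a. -/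
/-- if ρ,i ⊨ F_{⟨_a l,l+1⟩_b} φ with τ_i ∈ [r,r+1) for integers
r,l ≥ 0, and Idx^φ_{[r+l+1,r+l+2)}(ρ) = ∅, then condition (1a) holds:
τ_i < L^φ_{[r+l,r+l+1)}(ρ) and τ_i ∈ [r, L^φ_{[r+l,r+l+1)}(ρ) − l⟩_a. -/
theorem bounded_unit_future_1a_of_empty {n : ℕ} (hn : 0 < n)
    (τ : Fin n → ℝ) (hmono : StrictMono τ) (h0 : τ ⟨0, hn⟩ = 0)
    (hpos : ∀ j, 0 ≤ τ j)
    (φ : Fin n → Prop) (r l : ℤ) (hr : 0 ≤ r) (hl : 0 ≤ l) (aO bO : Bool) (i : Fin n)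
    (hri : (r : ℝ) ≤ τ i ∧ τ i < (r : ℝ) + 1)
    (L1 : ℝ)
    (hL1 : IsLastIn τ φ (Set.Ico ((r : ℝ) + l) ((r : ℝ) + l + 1)) L1)
    (hempty : ∀ j, ¬ (φ j ∧ τ j ∈ Set.Ico ((r : ℝ) + l + 1) ((r : ℝ) + l + 2)))
    (hsat : ∃ j, i < j ∧ φ j ∧ lbMem aO (l : ℝ) (τ j - τ i) ∧
        ubMem bO ((l : ℝ) + 1) (τ j - τ i)) :
    τ i < L1 ∧ (r : ℝ) ≤ τ i ∧ ubMem aO (L1 - (l : ℝ)) (τ i) := by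
  obtain ⟨j, hij, hφj, hlb, hub⟩ := hsat
  have hl' : (0:ℝ) ≤ (l:ℝ) := by exact_mod_cast hl
  have hdl : (l:ℝ) ≤ τ j - τ i := by
    cases aO <;> simp [lbMem] at hlb <;> linarith
  have hdu : τ j - τ i ≤ (l:ℝ) + 1 := by
    cases bO <;> simp [ubMem] at hub <;> linarith
  have hlt2 : τ j < (r:ℝ) + l + 2 := by linarith [hri.2]
  have hmemj : τ j ∈ Set.Ico ((r : ℝ) + l) ((r : ℝ) + l + 1) := by
    constructor
    · linarith [hri.1]
    · by_contra h
      exact hempty j ⟨hφj, by constructor <;> linarith⟩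
  have htij : τ i < τ j := hmono hij
  have hjL : τ j ≤ L1 := by
    rcases hL1 with ⟨j0, hφ0, hmem0, heq, hmax⟩ | ⟨hno, _⟩
    · have := hmax j hφj hmemj
      have := hmono.monotone this
      linarith
    · exact absurd ⟨hφj, hmemj⟩ (hno j)
  refine ⟨by linarith, hri.1, ?_⟩
  cases aO <;> simp [lbMem, ubMem] at hlb ⊢ <;> linarith
end
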